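/- Let N ≥ 1 be an integer and f a real number with f ≥ 1/N. Then every complex eigenvalue μ of the simple Leslie matrix L_f of order N satisfies |μ| < 1 + f, and L_f has a real eigenvalue λ with λ ≥ 1 + f − 1/N. -/

import Mathlib

/-- The simple Leslie matrix of order `N` with constant fertility rate `f`:
first row all `f`, subdiagonal entries `1`, all other entries `0`. -/
def leslieSimple (N : ℕ) (f : ℝ) : Matrix (Fin N) (Fin N) ℝ :=
  fun i j => if i.val = 0 then f else if i.val = j.val + 1 then 1 else 0

open Polynomial Matrix Finset

lemma my_eval_charpoly {n : Type*} [DecidableEq n] [Fintype n] {R : Type*} [CommRing R]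
    (M : Matrix n n R) (μ : R) :
    M.charpoly.eval μ = (μ • (1 : Matrix n n R) - M).det := by
  rw [Matrix.charpoly, ← Polynomial.coe_evalRingHom, RingHom.map_det]
  congr 1
  ext i j
  by_cases h : i = j <;>
    simp [h, Matrix.charmatrix_apply_eq, Matrix.charmatrix_apply_ne, Matrix.one_apply]

lemma root_iff_eigen {n : Type*} [DecidableEq n] [Fintype n] (M : Matrix n n ℂ) (μ : ℂ) :
    M.charpoly.IsRoot μ ↔ ∃ v : n → ℂ, v ≠ 0 ∧ M.mulVec v = μ • v := by
  rw [Polynomial.IsRoot, my_eval_charpoly, ← Matrix.exists_mulVec_eq_zero_iff]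
  simp only [Matrix.sub_mulVec, Matrix.smul_mulVec, Matrix.one_mulVec, sub_eq_zero]
  constructor
  · rintro ⟨v, hv, h⟩; exact ⟨v, hv, h.symm⟩
  · rintro ⟨v, hv, h⟩; exact ⟨v, hv, h.symm⟩

lemma leslie_mulVec {N : ℕ} (hN : 1 ≤ N) (f : ℝ) (v : Fin N → ℂ) (i : Fin N) :
    ((leslieSimple N f).map (Complex.ofReal ·)).mulVec v i =
      if h : i.val = 0 then (f : ℂ) * ∑ j, v j else v ⟨i.val - 1, by omega⟩ := by
  rw [Matrix.mulVec, dotProduct]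
  by_cases h0 : i.val = 0
  · simp [leslieSimple, h0, Finset.mul_sum]
  · rw [dif_neg h0]
    rw [Finset.sum_eq_single (⟨i.val - 1, by omega⟩ : Fin N)]
    · simp only [leslieSimple, Matrix.map_apply, if_neg h0,
        if_pos (show i.val = i.val - 1 + 1 by omega)]
      simp
    · intro j _ hj
      simp only [leslieSimple, Matrix.map_apply, if_neg h0]
      have : ¬ i.val = j.val + 1 := by
        intro h; apply hj; apply Fin.ext; simp; omega
      simp [this]
    · intro h; exact absurd (Finset.mem_univ _) h

lemma leslie_eigen_eq {N : ℕ} (hN : 1 ≤ N) (f : ℝ) (hf0 : f ≠ 0) (μ : ℂ) (v : Fin N → ℂ)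
    (hv : v ≠ 0)
    (h : ((leslieSimple N f).map (Complex.ofReal ·)).mulVec v = μ • v) :
    μ ^ N = (f : ℂ) * ∑ k ∈ Finset.range N, μ ^ k := by
  have hrow0 : (f : ℂ) * ∑ j, v j = μ * v ⟨0, by omega⟩ := by
    have := congrFun h ⟨0, by omega⟩
    rwa [leslie_mulVec hN, dif_pos rfl] at this
  have hrec : ∀ i : Fin N, i.val ≠ 0 → v ⟨i.val - 1, by omega⟩ = μ * v i := by
    intro i hi
    have := congrFun h i
    rwa [leslie_mulVec hN, dif_neg hi] at this
  have hpow : ∀ k, ∀ hk : k < N, v ⟨N - 1 - k, by omega⟩ = μ ^ k * v ⟨N - 1, by omega⟩ := by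
    intro k
    induction k with
    | zero => intro _; simp
    | succ m ih =>
      intro hk
      have h1 : v ⟨N - 1 - (m+1), by omega⟩ = μ * v ⟨N - 1 - m, by omega⟩ := by
        have := hrec ⟨N - 1 - m, by omega⟩ (by simp; omega)
        convert this using 3 <;> simp <;> omega
      rw [h1, ih (by omega), pow_succ]; ring
  have hlast : v ⟨N - 1, by omega⟩ ≠ 0 := by
    intro h0
    apply hv
    funext i
    have hi : i.val ≤ N - 1 := by omega
    have := hpow (N - 1 - i.val) (by omega)
    have heq : (⟨N - 1 - (N - 1 - i.val), by omega⟩ : Fin N) = i := by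
      apply Fin.ext; simp; omega
    rw [heq, h0, mul_zero] at this
    simp [this]
  have hvall : ∀ i : Fin N, v i = μ ^ (N - 1 - i.val) * v ⟨N - 1, by omega⟩ := by
    intro i
    have := hpow (N - 1 - i.val) (by omega)
    have heq : (⟨N - 1 - (N - 1 - i.val), by omega⟩ : Fin N) = i := by
      apply Fin.ext; simp; omega
    rwa [heq] at this
  have hsum : ∑ j, v j = (∑ k ∈ Finset.range N, μ ^ k) * v ⟨N - 1, by omega⟩ := by
    rw [Finset.sum_mul]
    calc ∑ j, v j = ∑ j : Fin N, μ ^ (N - 1 - j.val) * v ⟨N - 1, by omega⟩ := by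
          exact Finset.sum_congr rfl fun j _ => hvall j
      _ = ∑ k ∈ Finset.range N, μ ^ (N - 1 - k) * v ⟨N - 1, by omega⟩ :=
          Fin.sum_univ_eq_sum_range (fun k => μ ^ (N - 1 - k) * v ⟨N - 1, by omega⟩) N
      _ = ∑ k ∈ Finset.range N, μ ^ k * v ⟨N - 1, by omega⟩ :=
          Finset.sum_range_reflect (fun k => μ ^ k * v ⟨N - 1, by omega⟩) N
  have h0 : v ⟨0, by omega⟩ = μ ^ (N - 1) * v ⟨N - 1, by omega⟩ := by
    have := hvall ⟨0, by omega⟩; simpa using this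
  rw [hsum, h0] at hrow0
  have hμN : μ * μ ^ (N - 1) = μ ^ N := by
    rw [← pow_succ']; congr 1; omega
  apply mul_right_cancel₀ hlast
  calc μ ^ N * v ⟨N - 1, by omega⟩ = μ * (μ ^ (N - 1) * v ⟨N - 1, by omega⟩) := by
        rw [← hμN]; ring
    _ = (f : ℂ) * ((∑ k ∈ Finset.range N, μ ^ k) * v ⟨N - 1, by omega⟩) := hrow0.symm
    _ = ((f : ℂ) * ∑ k ∈ Finset.range N, μ ^ k) * v ⟨N - 1, by omega⟩ := by ring

lemma leslie_root_of_eq {N : ℕ} (hN : 1 ≤ N) (f lam : ℝ)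
    (heq : lam ^ N = f * ∑ k ∈ Finset.range N, lam ^ k) :
    ((leslieSimple N f).map (Complex.ofReal ·)).charpoly.IsRoot (lam : ℂ) := by
  rw [root_iff_eigen]
  refine ⟨fun i => (lam : ℂ) ^ (N - 1 - i.val), ?_, ?_⟩
  · intro h0
    have := congrFun h0 ⟨N - 1, by omega⟩
    simp at this
  · have heqC : (lam : ℂ) ^ N = (f : ℂ) * ∑ k ∈ Finset.range N, (lam : ℂ) ^ k := by
      have := congrArg (Complex.ofReal ·) heq
      push_cast at this
      simpa using this
    funext i
    rw [leslie_mulVec hN]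
    by_cases h0 : i.val = 0
    · rw [dif_pos h0]
      have hsum : ∑ j : Fin N, (lam:ℂ) ^ (N - 1 - j.val) = ∑ k ∈ Finset.range N, (lam:ℂ) ^ k := by
        calc ∑ j : Fin N, (lam:ℂ) ^ (N - 1 - j.val)
            = ∑ k ∈ Finset.range N, (lam:ℂ) ^ (N - 1 - k) :=
              Fin.sum_univ_eq_sum_range (fun k => (lam:ℂ) ^ (N - 1 - k)) N
          _ = ∑ k ∈ Finset.range N, (lam:ℂ) ^ k :=
              Finset.sum_range_reflect (fun k => (lam:ℂ) ^ k) N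
      rw [hsum, ← heqC]
      simp only [Pi.smul_apply, smul_eq_mul, h0]
      rw [show N - 1 - 0 = N - 1 from rfl, ← pow_succ']
      congr 1; omega
    · rw [dif_neg h0]
      simp only [Pi.smul_apply, smul_eq_mul]
      rw [← pow_succ']
      congr 1; omega

/-- If `N ≥ 1` and `f ≥ 1/N`, then every complex eigenvalue `μ` of the simple Leslie
matrix `L_f` satisfies `|μ| < 1 + f`, and `L_f` has a real eigenvalue
`λ ≥ 1 + f - 1/N`.  (Complex eigenvalues are the roots of the characteristic
polynomial.) -/
theorem leslie_eigenvalue_bounds (N : ℕ) (hN : 1 ≤ N) (f : ℝ) (hf : 1 / (N : ℝ) ≤ f) :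
    (∀ μ : ℂ, ((leslieSimple N f).map (Complex.ofReal ·)).charpoly.IsRoot μ →
      ‖μ‖ < 1 + f) ∧
    (∃ lam : ℝ, ((leslieSimple N f).map (Complex.ofReal ·)).charpoly.IsRoot (lam : ℂ) ∧
      1 + f - 1 / (N : ℝ) ≤ lam) := by
  have hNR : (0 : ℝ) < N := by positivity
  have hfpos : 0 < f := lt_of_lt_of_le (by positivity) hf
  have hfN : 1 ≤ f * N := by
    rw [div_le_iff₀ hNR] at hf; linarith
  constructor
  · intro μ hμ
    obtain ⟨v, hv, hMv⟩ := (root_iff_eigen _ _).mp hμ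
    have heq := leslie_eigen_eq hN f (ne_of_gt hfpos) μ v hv hMv
    by_contra hcon
    push_neg at hcon
    set r := ‖μ‖ with hr
    have hr1 : 1 + f ≤ r := hcon
    have hrg : 1 < r := by linarith
    have habs : r ^ N ≤ f * ∑ k ∈ Finset.range N, r ^ k := by
      calc r ^ N = ‖μ ^ N‖ := by rw [norm_pow]
        _ = ‖(f : ℂ) * ∑ k ∈ Finset.range N, μ ^ k‖ := by rw [heq]
        _ = f * ‖∑ k ∈ Finset.range N, μ ^ k‖ := by
            rw [norm_mul, Complex.norm_real, Real.norm_of_nonneg hfpos.le]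
        _ ≤ f * ∑ k ∈ Finset.range N, r ^ k := by
            gcongr
            calc ‖∑ k ∈ Finset.range N, μ ^ k‖
                ≤ ∑ k ∈ Finset.range N, ‖μ ^ k‖ := by
                  exact norm_sum_le _ _
              _ = ∑ k ∈ Finset.range N, r ^ k :=
                  Finset.sum_congr rfl fun k _ => norm_pow _ _
    have hgeom : (∑ k ∈ Finset.range N, r ^ k) * (r - 1) = r ^ N - 1 := geom_sum_mul r N
    have hSpos : 0 ≤ ∑ k ∈ Finset.range N, r ^ k :=
      Finset.sum_nonneg fun k _ => by positivity
    nlinarith [habs, hgeom, hSpos, hr1, hrg]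
  · set g : ℝ → ℝ := fun x => x ^ N - f * ∑ k ∈ Finset.range N, x ^ k with hg
    have hgcont : Continuous g := by
      apply Continuous.sub (continuous_pow N)
      exact continuous_const.mul (continuous_finset_sum _ fun k _ => continuous_pow k)
    set l0 : ℝ := 1 + f - 1 / N with hl0
    have hl0le : l0 ≤ 1 + f := by
      have : (0:ℝ) ≤ 1 / N := by positivity
      rw [hl0]; linarith
    have hgb : g (1 + f) = 1 := by
      have hgeom : (∑ k ∈ Finset.range N, (1 + f) ^ k) * ((1 + f) - 1) = (1 + f) ^ N - 1 :=
        geom_sum_mul _ N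
      simp only [add_sub_cancel_left] at hgeom
      simp only [hg]
      rw [mul_comm f, hgeom]; ring
    have hga : g l0 ≤ 0 := by
      rcases eq_or_lt_of_le hf with heq | hlt
      · have : l0 = 1 := by rw [hl0, ← heq]; ring
        rw [this]
        simp only [hg, one_pow, Finset.sum_const, Finset.card_range, nsmul_eq_mul, mul_one]
        linarith
      · have hc : 0 < l0 - 1 := by rw [hl0]; linarith [ (div_lt_iff₀ hNR).mp hlt ]
        have hl0pos : 0 < l0 := by linarith
        have hbern : N * f ≤ l0 ^ N := by
          have := one_add_mul_le_pow (a := l0 - 1) (by linarith) N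
          have h2 : 1 + N * (l0 - 1) = N * f - N * (1/N) + 1 := by ring
          have h3 : (N : ℝ) * (1/N) = 1 := by field_simp
          calc (N:ℝ) * f = 1 + N * (l0 - 1) := by rw [h2, h3]; ring
            _ ≤ (1 + (l0 - 1)) ^ N := this
            _ = l0 ^ N := by ring_nf
        have hgeom : (∑ k ∈ Finset.range N, l0 ^ k) * (l0 - 1) = l0 ^ N - 1 := geom_sum_mul _ N
        have key : g l0 * (l0 - 1) ≤ 0 := by
          simp only [hg]
          have expand : (l0 ^ N - f * ∑ k ∈ Finset.range N, l0 ^ k) * (l0 - 1)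
              = l0 ^ N * (l0 - 1) - f * (l0 ^ N - 1) := by
            rw [← hgeom]; ring
          rw [expand]
          have hl01 : l0 - 1 = f - 1/N := by rw [hl0]; ring
          rw [hl01]
          have h1N : (1:ℝ)/N * (N * f) = f := by field_simp
          nlinarith [pow_pos hl0pos N]
        nlinarith [key, hc]
    obtain ⟨lam, hlam_mem, hlam_eq⟩ :=
      intermediate_value_Icc hl0le hgcont.continuousOn ⟨hga, by rw [hgb]; linarith⟩
    refine ⟨lam, ?_, hlam_mem.1⟩
    apply leslie_root_of_eq hN
    have : lam ^ N - f * ∑ k ∈ Finset.range N, lam ^ k = 0 := hlam_eq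
    linarith
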